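/- Let τ ⊂ ℝ² be a nondegenerate closed triangle of diameter h, and let e be one of its edges, of length |e| > 0. Then for every affine function w : ℝ² → ℝ, say w(x) = a · x + c with a ∈ ℝ² and c ∈ ℝ, one has ∫_τ w(x)² dx ≤ 2 (|τ|/|e|) ∫_e w² dσ + 2 h² |τ| |a|², where |τ| is the area of τ and ∫_e · dσ denotes the one-dimensional (arclength) integral along the segment e. -/

import Mathlib

open MeasureTheory

/-- Let `τ ⊂ ℝ²` be a nondegenerate closed triangle (convex hull of
three non-collinear points `p, q, r`) of diameter `h = diam τ`, and let `e = [p,q]` be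
one of its edges (its length `|e| = dist p q` is positive). Then for every affine
function `w(x) = ⟪a, x⟫ + c`,
`∫_τ w² ≤ 2 (|τ|/|e|) ∫_e w² dσ + 2 h² |τ| |a|²`,
where `|τ|` is the area of `τ` and `∫_e ⬝ dσ` is the arclength (1-dimensional
Hausdorff measure) integral along `e`. -/
theorem stmt_13 (p q r : EuclideanSpace ℝ (Fin 2))
    (hpqr : ¬ Collinear ℝ ({p, q, r} : Set (EuclideanSpace ℝ (Fin 2))))
    (a : EuclideanSpace ℝ (Fin 2)) (c : ℝ) :
    (∫ x in convexHull ℝ ({p, q, r} : Set (EuclideanSpace ℝ (Fin 2))),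
        ((inner ℝ a x : ℝ) + c) ^ 2)
      ≤ 2 * ((volume (convexHull ℝ ({p, q, r} : Set (EuclideanSpace ℝ (Fin 2))))).toReal
              / dist p q)
          * (∫ x in segment ℝ p q, ((inner ℝ a x : ℝ) + c) ^ 2 ∂(μH[1]))
        + 2 * (Metric.diam (convexHull ℝ ({p, q, r} : Set (EuclideanSpace ℝ (Fin 2))))) ^ 2
          * (volume (convexHull ℝ ({p, q, r} : Set (EuclideanSpace ℝ (Fin 2))))).toReal
          * ‖a‖ ^ 2 := by
  set K : Set (EuclideanSpace ℝ (Fin 2)) := convexHull ℝ ({p, q, r} : Set _) with hK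
  set e : Set (EuclideanSpace ℝ (Fin 2)) := segment ℝ p q with he
  set w : EuclideanSpace ℝ (Fin 2) → ℝ := fun x => ((inner ℝ a x : ℝ) + c) ^ 2 with hw
  set h : ℝ := Metric.diam K with hh
  -- basic facts
  have hpq : p ≠ q := by
    rintro rfl
    exact hpqr (by simpa using (collinear_pair ℝ p r).subset (by intro x hx; simpa using hx))
  have hL : (0:ℝ) < dist p q := dist_pos.mpr hpq
  have hKcpt : IsCompact K := (Set.toFinite _).isCompact_convexHull (𝕜 := ℝ)
  have hKm : MeasurableSet K := hKcpt.measurableSet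
  have hKvol : volume K ≠ ⊤ := hKcpt.measure_lt_top.ne
  have heK : e ⊆ K := segment_subset_convexHull (by simp) (by simp)
  have hecpt : IsCompact e := by rw [he, ← convexHull_pair]; exact (Set.toFinite _).isCompact_convexHull (𝕜 := ℝ)
  have hem : MeasurableSet e := hecpt.measurableSet
  have heμ : μH[1] e = edist p q := hausdorffMeasure_segment p q
  have heμfin : μH[1] e ≠ ⊤ := by rw [heμ]; exact edist_ne_top p q
  have heμtoReal : (μH[1] e).toReal = dist p q := by
    rw [heμ, edist_dist, ENNReal.toReal_ofReal dist_nonneg]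
  have hwcont : Continuous w := by
    apply Continuous.pow
    exact ((innerSL ℝ a).continuous).add continuous_const
  -- integrability
  have hInt_e : IntegrableOn w e μH[1] := by
    obtain ⟨M, hM⟩ := hecpt.exists_bound_of_continuousOn hwcont.continuousOn
    exact Measure.integrableOn_of_bounded heμfin hwcont.aestronglyMeasurable
      ((ae_restrict_iff' hem).2 (Filter.Eventually.of_forall hM))
  have hInt_K : IntegrableOn w K volume := hwcont.continuousOn.integrableOn_compact hKcpt
  set Ie : ℝ := ∫ x in e, w x ∂(μH[1]) with hIe
  have hIe_nonneg : 0 ≤ Ie := setIntegral_nonneg hem (fun y _ => sq_nonneg _)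
  -- pointwise bound on K
  have key : ∀ x ∈ K, w x ≤ 2 * Ie / dist p q + 2 * h ^ 2 * ‖a‖ ^ 2 := by
    intro x hx
    have hbd : ∀ y ∈ e, w x ≤ 2 * w y + 2 * h ^ 2 * ‖a‖ ^ 2 := by
      intro y hy
      have hd : dist x y ≤ h := Metric.dist_le_diam_of_mem hKcpt.isBounded hx (heK hy)
      have hinner : ((inner ℝ a (x - y) : ℝ)) ^ 2 ≤ ‖a‖ ^ 2 * h ^ 2 := by
        have h1 : |(inner ℝ a (x - y) : ℝ)| ≤ ‖a‖ * ‖x - y‖ := abs_real_inner_le_norm a (x - y)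
        have h2 : ‖x - y‖ ≤ h := by rwa [← dist_eq_norm]
        calc ((inner ℝ a (x - y) : ℝ)) ^ 2 = |(inner ℝ a (x - y) : ℝ)| ^ 2 := (sq_abs _).symm
          _ ≤ (‖a‖ * ‖x - y‖) ^ 2 := by
              apply pow_le_pow_left₀ (abs_nonneg _) h1
          _ ≤ (‖a‖ * h) ^ 2 := by
              apply pow_le_pow_left₀ (by positivity)
              exact mul_le_mul_of_nonneg_left h2 (norm_nonneg _)
          _ = ‖a‖ ^ 2 * h ^ 2 := by ring
      have hsplit : ((inner ℝ a x : ℝ) + c) = ((inner ℝ a y : ℝ) + c) + (inner ℝ a (x - y) : ℝ) := by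
        rw [inner_sub_right]; ring
      have : w x ≤ 2 * w y + 2 * ((inner ℝ a (x - y) : ℝ)) ^ 2 := by
        rw [hw]; simp only []
        rw [hsplit]
        nlinarith [sq_nonneg (((inner ℝ a y : ℝ) + c) - (inner ℝ a (x - y) : ℝ))]
      nlinarith
    -- integrate over e
    have h1 : ∫ _ in e, w x ∂(μH[1]) ≤ ∫ y in e, (2 * w y + 2 * h ^ 2 * ‖a‖ ^ 2) ∂(μH[1]) := by
      apply setIntegral_mono_on (integrableOn_const heμfin)
        ((hInt_e.const_mul 2).add (integrableOn_const heμfin)) hem hbd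
    rw [setIntegral_const] at h1
    rw [integral_add (hInt_e.const_mul 2) (integrableOn_const heμfin),
      integral_const_mul, setIntegral_const, measureReal_def, heμtoReal, smul_eq_mul, smul_eq_mul] at h1
    have h2 : w x ≤ (2 * Ie + dist p q * (2 * h ^ 2 * ‖a‖ ^ 2)) / dist p q :=
      (le_div_iff₀ hL).2 (by rw [hIe]; linarith [h1])
    refine h2.trans_eq ?_
    field_simp
  -- integrate over K
  have main : ∫ x in K, w x ≤ (2 * Ie / dist p q + 2 * h ^ 2 * ‖a‖ ^ 2) * (volume K).toReal := by
    calc ∫ x in K, w x ≤ ∫ _ in K, (2 * Ie / dist p q + 2 * h ^ 2 * ‖a‖ ^ 2) :=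
          setIntegral_mono_on hInt_K (integrableOn_const hKvol) hKm key
      _ = (volume K).toReal * (2 * Ie / dist p q + 2 * h ^ 2 * ‖a‖ ^ 2) := by
          rw [setIntegral_const, smul_eq_mul, measureReal_def]
      _ = _ := by ring
  refine main.trans_eq ?_
  field_simp
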